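/- Let (u₁, v₁), (u₂, v₂), (δx, δy) ∈ ℝ² be boundary data, and set μ₁ = ‖(u₁, v₁)‖, μ₂ = ‖(u₂, v₂)‖, and T_MAX = μ₁ + μ₂ + √2·( (2δx − μ₁u₁ − μ₂u₂)² + (2δy − μ₁v₁ − μ₂v₂)² )^{1/4}. Then there exists T ≤ T_MAX and an admissible trajectory on [0, T] meeting the boundary data; in particular the minimal time T* satisfies T* ≤ T_MAX. -/

import Mathlib

/-- An admissible trajectory on `[0, T]`: a differentiable planar curve
`(x, y)` whose velocity is Lipschitz with constant `1` (in the Euclidean norm)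
on `[0, T]`. -/
def IsAdmissible (T : ℝ) (x y : ℝ → ℝ) : Prop :=
  Differentiable ℝ x ∧ Differentiable ℝ y ∧
  ∀ s ∈ Set.Icc (0 : ℝ) T, ∀ t ∈ Set.Icc (0 : ℝ) T,
    Real.sqrt ((deriv x s - deriv x t) ^ 2 + (deriv y s - deriv y t) ^ 2) ≤ |s - t|

/-- The trajectory `(x, y)` on `[0, T]` meets the boundary data: initial
velocity `(u₁, v₁)`, final velocity `(u₂, v₂)`, displacement `(δx, δy)`. -/
def MeetsBoundary (T u₁ v₁ u₂ v₂ δx δy : ℝ) (x y : ℝ → ℝ) : Prop :=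
  deriv x 0 = u₁ ∧ deriv y 0 = v₁ ∧ deriv x T = u₂ ∧ deriv y T = v₂ ∧
  x T - x 0 = δx ∧ y T - y 0 = δy

/-- The minimal time `T*` for the boundary data. -/
noncomputable def minTime (u₁ v₁ u₂ v₂ δx δy : ℝ) : ℝ :=
  sInf {T : ℝ | 0 ≤ T ∧ ∃ x y : ℝ → ℝ,
    IsAdmissible T x y ∧ MeetsBoundary T u₁ v₁ u₂ v₂ δx δy x y}

/-! ### Auxiliary lemmas -/

open intervalIntegral in
lemma integral_linear (a b : ℝ) : ∫ t in a..b, (t - a) = (b - a)^2/2 := by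
  rw [intervalIntegral.integral_sub intervalIntegrable_id intervalIntegrable_const,
    integral_id, integral_const]
  simp [smul_eq_mul]; ring

open intervalIntegral in
lemma integral_linear' (a b : ℝ) : ∫ t in a..b, (b - t) = (b - a)^2/2 := by
  rw [intervalIntegral.integral_sub intervalIntegrable_const intervalIntegrable_id,
    integral_id, integral_const]
  simp [smul_eq_mul]; ring

lemma tri2 (a b a' b' : ℝ) :
    Real.sqrt ((a+a')^2+(b+b')^2) ≤ Real.sqrt (a^2+b^2) + Real.sqrt (a'^2+b'^2) := by
  have h : ∀ p q : ℝ, Real.sqrt (p^2+q^2) = ‖(⟨p, q⟩ : ℂ)‖ := by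
    intro p q
    rw [Complex.norm_def, Complex.normSq_mk]; ring_nf
  rw [h, h, h]
  have : (⟨a+a', b+b'⟩ : ℂ) = ⟨a,b⟩ + ⟨a',b'⟩ := by
    apply Complex.ext <;> simp
  rw [this]; exact norm_add_le _ _

lemma tri3 (a b c a' b' c' : ℝ) :
    Real.sqrt ((a+b+c)^2+(a'+b'+c')^2) ≤
      Real.sqrt (a^2+a'^2) + Real.sqrt (b^2+b'^2) + Real.sqrt (c^2+c'^2) := by
  calc Real.sqrt ((a+b+c)^2+(a'+b'+c')^2) ≤
      Real.sqrt ((a+b)^2+(a'+b')^2) + Real.sqrt (c^2+c'^2) := tri2 _ _ _ _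
    _ ≤ Real.sqrt (a^2+a'^2) + Real.sqrt (b^2+b'^2) + Real.sqrt (c^2+c'^2) := by
        have := tri2 a a' b b'
        linarith

lemma scale_le (p q e : ℝ) (h : p^2 + q^2 ≤ 1) :
    Real.sqrt ((e*p)^2 + (e*q)^2) ≤ |e| := by
  have h1 : (e*p)^2 + (e*q)^2 ≤ e^2 := by nlinarith [sq_nonneg e]
  calc Real.sqrt ((e*p)^2 + (e*q)^2) ≤ Real.sqrt (e^2) := Real.sqrt_le_sqrt h1
    _ = |e| := Real.sqrt_sq_eq_abs e

lemma tent_lip (r c a b : ℝ) :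
    |max (r - |a - c|) 0 - max (r - |b - c|) 0| ≤ |a - b| := by
  calc |max (r - |a - c|) 0 - max (r - |b - c|) 0| ≤ |(r - |a-c|) - (r - |b-c|)| :=
        abs_max_sub_max_le_abs _ _ _
    _ = |(|b-c| - |a-c|)| := by rw [show (r - |a-c|) - (r - |b-c|) = |b-c| - |a-c| by ring]
    _ ≤ |(b - c) - (a - c)| := abs_abs_sub_abs_le_abs_sub _ _
    _ = |a - b| := by rw [show (b-c) - (a-c) = b - a by ring, abs_sub_comm]

lemma tent_clamp (r c u : ℝ) (hr : 0 ≤ r) :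
    max (r - |u - c|) 0 = max (r - |max (min u (c+r)) (c-r) - c|) 0 := by
  rcases le_total u (c-r) with h|h
  · have e1 : min u (c+r) = u := min_eq_left (by linarith)
    have e2 : max u (c-r) = c - r := max_eq_right h
    have e3 : |u - c| = -(u - c) := abs_of_nonpos (by linarith)
    have e4 : |c - r - c| = -(c - r - c) := abs_of_nonpos (by linarith)
    rw [e1, e2, e3, e4, max_eq_right (by linarith), max_eq_right (by linarith)]
  · rcases le_total u (c+r) with h'|h'
    · rw [min_eq_left h', max_eq_left h]
    · have e1 : min u (c+r) = c + r := min_eq_right h'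
      have e2 : max (c+r) (c-r) = c + r := max_eq_left (by linarith)
      have e3 : |u - c| = u - c := abs_of_nonneg (by linarith)
      have e4 : |c + r - c| = c + r - c := abs_of_nonneg (by linarith)
      rw [e1, e2, e3, e4, max_eq_right (by linarith), max_eq_right (by linarith)]

lemma clampsum {t t₁ t₃ T : ℝ} (h0 : 0 ≤ t) (h1 : 0 ≤ t₁) (h13 : t₁ ≤ t₃) (h3T : t₃ ≤ T)
    (htT : t ≤ T) :
    min t t₁ + max (min t t₃) t₁ + max (min t T) t₃ = t + t₁ + t₃ := by
  rcases le_total t t₁ with h|h <;> rcases le_total t t₃ with h'|h' <;>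
    simp [min_def, max_def] <;> split_ifs <;> linarith

/-! ### The explicit trajectory -/

noncomputable def vel (μ₁ μ₂ r a b c : ℝ) : ℝ → ℝ := fun u =>
  (μ₁ - min u μ₁) * a + max (r - |u - (μ₁ + r)|) 0 * b +
  (max (min u (μ₁ + 2*r + μ₂)) (μ₁ + 2*r) - (μ₁ + 2*r)) * c

noncomputable def pos (μ₁ μ₂ r a b c : ℝ) : ℝ → ℝ := fun u =>
  ∫ s in (0:ℝ)..u, vel μ₁ μ₂ r a b c s

lemma vel_cont (μ₁ μ₂ r a b c : ℝ) : Continuous (vel μ₁ μ₂ r a b c) := by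
  unfold vel
  exact (((continuous_const.sub (continuous_id.min continuous_const)).mul continuous_const).add
    (((continuous_const.sub ((continuous_id.sub continuous_const).abs)).max
      continuous_const).mul continuous_const)).add
    ((((continuous_id.min continuous_const).max continuous_const).sub
      continuous_const).mul continuous_const)

lemma pos_deriv (μ₁ μ₂ r a b c t : ℝ) :
    deriv (pos μ₁ μ₂ r a b c) t = vel μ₁ μ₂ r a b c t :=
  Continuous.deriv_integral _ (vel_cont μ₁ μ₂ r a b c) 0 t

lemma pos_diff (μ₁ μ₂ r a b c : ℝ) : Differentiable ℝ (pos μ₁ μ₂ r a b c) :=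
  fun t => (((vel_cont μ₁ μ₂ r a b c).integral_hasStrictDerivAt 0 t).hasDerivAt).differentiableAt

lemma vel_zero (μ₁ μ₂ r a b c : ℝ) (hμ₁ : 0 ≤ μ₁) (hμ₂ : 0 ≤ μ₂) (hr : 0 ≤ r) :
    vel μ₁ μ₂ r a b c 0 = μ₁ * a := by
  unfold vel
  have h1 : min (0:ℝ) μ₁ = 0 := min_eq_left hμ₁
  have h2 : max (r - |(0:ℝ) - (μ₁ + r)|) 0 = 0 := by
    apply max_eq_right
    rw [abs_of_nonpos (by linarith : (0:ℝ) - (μ₁ + r) ≤ 0)]; linarith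
  have h3 : max (min (0:ℝ) (μ₁ + 2*r + μ₂)) (μ₁ + 2*r) = μ₁ + 2*r := by
    rw [min_eq_left (by linarith)]
    exact max_eq_right (by linarith)
  rw [h1, h2, h3]; ring

lemma vel_T (μ₁ μ₂ r a b c : ℝ) (hμ₁ : 0 ≤ μ₁) (hμ₂ : 0 ≤ μ₂) (hr : 0 ≤ r) :
    vel μ₁ μ₂ r a b c (μ₁ + 2*r + μ₂) = μ₂ * c := by
  unfold vel
  have h1 : min (μ₁ + 2*r + μ₂) μ₁ = μ₁ := min_eq_right (by linarith)
  have h2 : max (r - |μ₁ + 2*r + μ₂ - (μ₁ + r)|) 0 = 0 := by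
    apply max_eq_right
    rw [abs_of_nonneg (by linarith : (0:ℝ) ≤ μ₁ + 2*r + μ₂ - (μ₁ + r))]; linarith
  have h3 : max (min (μ₁ + 2*r + μ₂) (μ₁ + 2*r + μ₂)) (μ₁ + 2*r) = μ₁ + 2*r + μ₂ := by
    rw [min_self]
    exact max_eq_left (by linarith)
  rw [h1, h2, h3]; ring

lemma vel_integral (μ₁ μ₂ r a b c : ℝ) (hμ₁ : 0 ≤ μ₁) (hμ₂ : 0 ≤ μ₂) (hr : 0 ≤ r) :
    ∫ s in (0:ℝ)..(μ₁+2*r+μ₂), vel μ₁ μ₂ r a b c s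
      = μ₁^2/2*a + r^2*b + μ₂^2/2*c := by
  have hc1 : Continuous (fun u : ℝ => μ₁ - min u μ₁) :=
    continuous_const.sub (continuous_id.min continuous_const)
  have hc2 : Continuous (fun u : ℝ => max (r - |u - (μ₁+r)|) 0) :=
    (continuous_const.sub ((continuous_id.sub continuous_const).abs)).max continuous_const
  have hc3 : Continuous (fun u : ℝ => max (min u (μ₁+2*r+μ₂)) (μ₁+2*r) - (μ₁+2*r)) :=
    ((continuous_id.min continuous_const).max continuous_const).sub continuous_const
  have I1 : ∫ s in (0:ℝ)..(μ₁+2*r+μ₂), (μ₁ - min s μ₁) = μ₁^2/2 := by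
    rw [← intervalIntegral.integral_add_adjacent_intervals (a := (0:ℝ)) (b := μ₁)
      (c := μ₁+2*r+μ₂) (hc1.intervalIntegrable _ _) (hc1.intervalIntegrable _ _)]
    have e1 : ∫ s in (0:ℝ)..μ₁, (μ₁ - min s μ₁) = ∫ s in (0:ℝ)..μ₁, (μ₁ - s) := by
      apply intervalIntegral.integral_congr
      intro u hu
      rw [Set.uIcc_of_le hμ₁] at hu
      dsimp only
      rw [min_eq_left hu.2]
    have e2 : ∫ s in μ₁..(μ₁+2*r+μ₂), (μ₁ - min s μ₁) = ∫ s in μ₁..(μ₁+2*r+μ₂), (0:ℝ) := by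
      apply intervalIntegral.integral_congr
      intro u hu
      rw [Set.uIcc_of_le (by linarith : μ₁ ≤ μ₁+2*r+μ₂)] at hu
      dsimp only
      rw [min_eq_right hu.1, sub_self]
    rw [e1, e2, integral_linear']
    simp
  have I2 : ∫ s in (0:ℝ)..(μ₁+2*r+μ₂), max (r - |s - (μ₁+r)|) 0 = r^2 := by
    have sp2 : ∫ s in (μ₁+r)..(μ₁+2*r+μ₂), max (r - |s - (μ₁+r)|) 0
        = (∫ s in (μ₁+r)..(μ₁+2*r), max (r - |s - (μ₁+r)|) 0)
          + ∫ s in (μ₁+2*r)..(μ₁+2*r+μ₂), max (r - |s - (μ₁+r)|) 0 :=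
      (intervalIntegral.integral_add_adjacent_intervals
        (hc2.intervalIntegrable _ _) (hc2.intervalIntegrable _ _)).symm
    have sp1 : ∫ s in μ₁..(μ₁+2*r+μ₂), max (r - |s - (μ₁+r)|) 0
        = (∫ s in μ₁..(μ₁+r), max (r - |s - (μ₁+r)|) 0)
          + ∫ s in (μ₁+r)..(μ₁+2*r+μ₂), max (r - |s - (μ₁+r)|) 0 :=
      (intervalIntegral.integral_add_adjacent_intervals
        (hc2.intervalIntegrable _ _) (hc2.intervalIntegrable _ _)).symm
    have sp0 : ∫ s in (0:ℝ)..(μ₁+2*r+μ₂), max (r - |s - (μ₁+r)|) 0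
        = (∫ s in (0:ℝ)..μ₁, max (r - |s - (μ₁+r)|) 0)
          + ∫ s in μ₁..(μ₁+2*r+μ₂), max (r - |s - (μ₁+r)|) 0 :=
      (intervalIntegral.integral_add_adjacent_intervals
        (hc2.intervalIntegrable _ _) (hc2.intervalIntegrable _ _)).symm
    have p1 : ∫ s in (0:ℝ)..μ₁, max (r - |s - (μ₁+r)|) 0 = ∫ s in (0:ℝ)..μ₁, (0:ℝ) := by
      apply intervalIntegral.integral_congr
      intro u hu
      rw [Set.uIcc_of_le hμ₁] at hu
      dsimp only
      rw [abs_of_nonpos (by linarith [hu.2] : u - (μ₁+r) ≤ 0)]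
      exact max_eq_right (by linarith [hu.2])
    have p2 : ∫ s in μ₁..(μ₁+r), max (r - |s - (μ₁+r)|) 0 = ∫ s in μ₁..(μ₁+r), (s - μ₁) := by
      apply intervalIntegral.integral_congr
      intro u hu
      rw [Set.uIcc_of_le (by linarith : μ₁ ≤ μ₁+r)] at hu
      dsimp only
      rw [abs_of_nonpos (by linarith [hu.2] : u - (μ₁+r) ≤ 0),
        max_eq_left (by linarith [hu.1])]
      ring
    have p3 : ∫ s in (μ₁+r)..(μ₁+2*r), max (r - |s - (μ₁+r)|) 0
        = ∫ s in (μ₁+r)..(μ₁+2*r), ((μ₁+2*r) - s) := by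
      apply intervalIntegral.integral_congr
      intro u hu
      rw [Set.uIcc_of_le (by linarith : μ₁+r ≤ μ₁+2*r)] at hu
      dsimp only
      rw [abs_of_nonneg (by linarith [hu.1] : (0:ℝ) ≤ u - (μ₁+r)),
        max_eq_left (by linarith [hu.2])]
      ring
    have p4 : ∫ s in (μ₁+2*r)..(μ₁+2*r+μ₂), max (r - |s - (μ₁+r)|) 0
        = ∫ s in (μ₁+2*r)..(μ₁+2*r+μ₂), (0:ℝ) := by
      apply intervalIntegral.integral_congr
      intro u hu
      rw [Set.uIcc_of_le (by linarith : μ₁+2*r ≤ μ₁+2*r+μ₂)] at hu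
      dsimp only
      rw [abs_of_nonneg (by linarith [hu.1] : (0:ℝ) ≤ u - (μ₁+r))]
      exact max_eq_right (by linarith [hu.1])
    rw [sp0, sp1, sp2, p1, p2, p3, p4, integral_linear, integral_linear']
    simp only [intervalIntegral.integral_zero, add_zero, zero_add]
    ring
  have I3 : ∫ s in (0:ℝ)..(μ₁+2*r+μ₂),
      (max (min s (μ₁+2*r+μ₂)) (μ₁+2*r) - (μ₁+2*r)) = μ₂^2/2 := by
    rw [← intervalIntegral.integral_add_adjacent_intervals (a := (0:ℝ)) (b := μ₁+2*r)
      (c := μ₁+2*r+μ₂) (hc3.intervalIntegrable _ _) (hc3.intervalIntegrable _ _)]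
    have e1 : ∫ s in (0:ℝ)..(μ₁+2*r), (max (min s (μ₁+2*r+μ₂)) (μ₁+2*r) - (μ₁+2*r))
        = ∫ s in (0:ℝ)..(μ₁+2*r), (0:ℝ) := by
      apply intervalIntegral.integral_congr
      intro u hu
      rw [Set.uIcc_of_le (by linarith : (0:ℝ) ≤ μ₁+2*r)] at hu
      dsimp only
      rw [min_eq_left (by linarith [hu.2]), max_eq_right hu.2, sub_self]
    have e2 : ∫ s in (μ₁+2*r)..(μ₁+2*r+μ₂), (max (min s (μ₁+2*r+μ₂)) (μ₁+2*r) - (μ₁+2*r))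
        = ∫ s in (μ₁+2*r)..(μ₁+2*r+μ₂), (s - (μ₁+2*r)) := by
      apply intervalIntegral.integral_congr
      intro u hu
      rw [Set.uIcc_of_le (by linarith : μ₁+2*r ≤ μ₁+2*r+μ₂)] at hu
      dsimp only
      rw [min_eq_left hu.2, max_eq_left hu.1]
    rw [e1, e2, integral_linear]
    simp only [intervalIntegral.integral_zero, zero_add]
    ring
  have expand : ∀ s : ℝ, vel μ₁ μ₂ r a b c s
      = (μ₁ - min s μ₁) * a + (max (r - |s - (μ₁+r)|) 0 * b
        + (max (min s (μ₁+2*r+μ₂)) (μ₁+2*r) - (μ₁+2*r)) * c) := by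
    intro s; unfold vel; ring
  rw [intervalIntegral.integral_congr (fun u _ => expand u)]
  rw [intervalIntegral.integral_add (f := fun s => (μ₁ - min s μ₁) * a)
    (g := fun s => max (r - |s - (μ₁+r)|) 0 * b
      + (max (min s (μ₁+2*r+μ₂)) (μ₁+2*r) - (μ₁+2*r)) * c)
    ((hc1.mul continuous_const).intervalIntegrable _ _)
    (((hc2.mul continuous_const).add (hc3.mul continuous_const)).intervalIntegrable _ _),
    intervalIntegral.integral_add (f := fun s => max (r - |s - (μ₁+r)|) 0 * b)
    (g := fun s => (max (min s (μ₁+2*r+μ₂)) (μ₁+2*r) - (μ₁+2*r)) * c)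
    ((hc2.mul continuous_const).intervalIntegrable _ _)
    ((hc3.mul continuous_const).intervalIntegrable _ _),
    intervalIntegral.integral_mul_const, intervalIntegral.integral_mul_const,
    intervalIntegral.integral_mul_const, I1, I2, I3]
  ring

lemma vel_lip (μ₁ μ₂ r ax bx cx ay by' cy : ℝ) (hμ₁ : 0 ≤ μ₁) (hμ₂ : 0 ≤ μ₂) (hr : 0 ≤ r)
    (h1 : ax^2 + ay^2 ≤ 1) (h2 : bx^2 + by'^2 ≤ 1) (h3 : cx^2 + cy^2 ≤ 1)
    {s t : ℝ} (hs : s ∈ Set.Icc (0:ℝ) (μ₁+2*r+μ₂)) (ht : t ∈ Set.Icc (0:ℝ) (μ₁+2*r+μ₂))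
    (hst : s ≤ t) :
    Real.sqrt ((vel μ₁ μ₂ r ax bx cx s - vel μ₁ μ₂ r ax bx cx t)^2 +
      (vel μ₁ μ₂ r ay by' cy s - vel μ₁ μ₂ r ay by' cy t)^2) ≤ |s - t| := by
  obtain ⟨hs0, hsT⟩ := hs
  obtain ⟨ht0, htT⟩ := ht
  set Δ1 : ℝ := (μ₁ - min s μ₁) - (μ₁ - min t μ₁) with hΔ1
  set Δ2 : ℝ := max (r - |s - (μ₁+r)|) 0 - max (r - |t - (μ₁+r)|) 0 with hΔ2
  set Δ3 : ℝ := (max (min s (μ₁+2*r+μ₂)) (μ₁+2*r)) - (max (min t (μ₁+2*r+μ₂)) (μ₁+2*r))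
    with hΔ3
  have hx : vel μ₁ μ₂ r ax bx cx s - vel μ₁ μ₂ r ax bx cx t
      = Δ1*ax + Δ2*bx + Δ3*cx := by
    rw [hΔ1, hΔ2, hΔ3]; unfold vel; ring
  have hy : vel μ₁ μ₂ r ay by' cy s - vel μ₁ μ₂ r ay by' cy t
      = Δ1*ay + Δ2*by' + Δ3*cy := by
    rw [hΔ1, hΔ2, hΔ3]; unfold vel; ring
  rw [hx, hy]
  have step1 : Real.sqrt ((Δ1*ax + Δ2*bx + Δ3*cx)^2 + (Δ1*ay + Δ2*by' + Δ3*cy)^2)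
      ≤ |Δ1| + |Δ2| + |Δ3| := by
    calc Real.sqrt ((Δ1*ax + Δ2*bx + Δ3*cx)^2 + (Δ1*ay + Δ2*by' + Δ3*cy)^2)
        ≤ Real.sqrt ((Δ1*ax)^2+(Δ1*ay)^2) + Real.sqrt ((Δ2*bx)^2+(Δ2*by')^2)
          + Real.sqrt ((Δ3*cx)^2+(Δ3*cy)^2) := tri3 _ _ _ _ _ _
      _ ≤ |Δ1| + |Δ2| + |Δ3| := by
          have := scale_le ax ay Δ1 h1
          have := scale_le bx by' Δ2 h2
          have := scale_le cx cy Δ3 h3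
          linarith
  have b1 : |Δ1| = min t μ₁ - min s μ₁ := by
    rw [hΔ1, show (μ₁ - min s μ₁) - (μ₁ - min t μ₁) = min t μ₁ - min s μ₁ by ring]
    exact abs_of_nonneg (sub_nonneg.2 (min_le_min hst (le_refl μ₁)))
  have hmono2 : max (min s (μ₁+2*r)) μ₁ ≤ max (min t (μ₁+2*r)) μ₁ :=
    max_le_max (min_le_min hst (le_refl _)) (le_refl _)
  have b2 : |Δ2| ≤ max (min t (μ₁+2*r)) μ₁ - max (min s (μ₁+2*r)) μ₁ := by
    rw [hΔ2, tent_clamp r (μ₁+r) s hr, tent_clamp r (μ₁+r) t hr]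
    have ea : μ₁ + r + r = μ₁ + 2*r := by ring
    have eb : μ₁ + r - r = μ₁ := by ring
    rw [ea, eb]
    calc |max (r - |max (min s (μ₁+2*r)) μ₁ - (μ₁+r)|) 0
          - max (r - |max (min t (μ₁+2*r)) μ₁ - (μ₁+r)|) 0|
        ≤ |max (min s (μ₁+2*r)) μ₁ - max (min t (μ₁+2*r)) μ₁| := tent_lip _ _ _ _
      _ = max (min t (μ₁+2*r)) μ₁ - max (min s (μ₁+2*r)) μ₁ := by
          rw [abs_sub_comm]
          exact abs_of_nonneg (sub_nonneg.2 hmono2)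
  have b3 : |Δ3| = max (min t (μ₁+2*r+μ₂)) (μ₁+2*r) - max (min s (μ₁+2*r+μ₂)) (μ₁+2*r) := by
    rw [hΔ3, abs_sub_comm]
    exact abs_of_nonneg (sub_nonneg.2 (max_le_max (min_le_min hst (le_refl _)) (le_refl _)))
  have cs := clampsum (t := s) (t₁ := μ₁) (t₃ := μ₁+2*r) (T := μ₁+2*r+μ₂)
    hs0 hμ₁ (by linarith) (by linarith) hsT
  have ct := clampsum (t := t) (t₁ := μ₁) (t₃ := μ₁+2*r) (T := μ₁+2*r+μ₂)
    ht0 hμ₁ (by linarith) (by linarith) htT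
  have habs : |s - t| = t - s := by
    rw [abs_sub_comm]; exact abs_of_nonneg (by linarith)
  rw [habs]
  calc Real.sqrt ((Δ1*ax + Δ2*bx + Δ3*cx)^2 + (Δ1*ay + Δ2*by' + Δ3*cy)^2)
      ≤ |Δ1| + |Δ2| + |Δ3| := step1
    _ ≤ t - s := by rw [b1, b3]; linarith [b2]

lemma key (μ₁ μ₂ d a a' b b' c c' : ℝ) (hμ₁ : 0 ≤ μ₁) (hμ₂ : 0 ≤ μ₂) (hd : 0 ≤ d)
    (h1 : a^2+a'^2 ≤ 1) (h2 : b^2+b'^2 ≤ 1) (h3 : c^2+c'^2 ≤ 1) :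
    ∃ x y : ℝ → ℝ, IsAdmissible (μ₁ + 2*Real.sqrt d + μ₂) x y ∧
      MeetsBoundary (μ₁ + 2*Real.sqrt d + μ₂) (μ₁*a) (μ₁*a') (μ₂*c) (μ₂*c')
        (μ₁^2/2*a + d*b + μ₂^2/2*c) (μ₁^2/2*a' + d*b' + μ₂^2/2*c') x y := by
  set r := Real.sqrt d with hrdef
  have hr : 0 ≤ r := Real.sqrt_nonneg d
  have hr2 : r^2 = d := Real.sq_sqrt hd
  have hTe : μ₁ + 2*r + μ₂ = μ₁ + 2*r + μ₂ := rfl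
  refine ⟨pos μ₁ μ₂ r a b c, pos μ₁ μ₂ r a' b' c', ⟨pos_diff _ _ _ _ _ _,
    pos_diff _ _ _ _ _ _, ?_⟩, ?_, ?_, ?_, ?_, ?_, ?_⟩
  · intro s hs t ht
    rw [pos_deriv, pos_deriv, pos_deriv, pos_deriv]
    rcases le_total s t with h|h
    · exact vel_lip μ₁ μ₂ r a b c a' b' c' hμ₁ hμ₂ hr h1 h2 h3 hs ht h
    · rw [show (vel μ₁ μ₂ r a b c s - vel μ₁ μ₂ r a b c t)^2
          = (vel μ₁ μ₂ r a b c t - vel μ₁ μ₂ r a b c s)^2 by ring,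
        show (vel μ₁ μ₂ r a' b' c' s - vel μ₁ μ₂ r a' b' c' t)^2
          = (vel μ₁ μ₂ r a' b' c' t - vel μ₁ μ₂ r a' b' c' s)^2 by ring,
        abs_sub_comm]
      exact vel_lip μ₁ μ₂ r a b c a' b' c' hμ₁ hμ₂ hr h1 h2 h3 ht hs h
  · rw [pos_deriv]; exact vel_zero _ _ _ _ _ _ hμ₁ hμ₂ hr
  · rw [pos_deriv]; exact vel_zero _ _ _ _ _ _ hμ₁ hμ₂ hr
  · rw [pos_deriv]; exact vel_T _ _ _ _ _ _ hμ₁ hμ₂ hr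
  · rw [pos_deriv]; exact vel_T _ _ _ _ _ _ hμ₁ hμ₂ hr
  · show (∫ s in (0:ℝ)..(μ₁+2*r+μ₂), vel μ₁ μ₂ r a b c s)
      - (∫ s in (0:ℝ)..(0:ℝ), vel μ₁ μ₂ r a b c s) = _
    rw [intervalIntegral.integral_same, vel_integral μ₁ μ₂ r a b c hμ₁ hμ₂ hr, hr2]
    ring
  · show (∫ s in (0:ℝ)..(μ₁+2*r+μ₂), vel μ₁ μ₂ r a' b' c' s)
      - (∫ s in (0:ℝ)..(0:ℝ), vel μ₁ μ₂ r a' b' c' s) = _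
    rw [intervalIntegral.integral_same, vel_integral μ₁ μ₂ r a' b' c' hμ₁ hμ₂ hr, hr2]
    ring

lemma norm_pair (p q : ℝ) :
    Real.sqrt (p^2+q^2) * (p / Real.sqrt (p^2+q^2)) = p ∧
    Real.sqrt (p^2+q^2) * (q / Real.sqrt (p^2+q^2)) = q ∧
    (p / Real.sqrt (p^2+q^2))^2 + (q / Real.sqrt (p^2+q^2))^2 ≤ 1 := by
  set m := Real.sqrt (p^2+q^2) with hm
  have hm2 : m^2 = p^2+q^2 := Real.sq_sqrt (by positivity)
  by_cases h : m = 0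
  · have hp : p = 0 := by nlinarith [sq_nonneg p, sq_nonneg q]
    have hq : q = 0 := by nlinarith [sq_nonneg p, sq_nonneg q]
    simp [h, hp, hq]
  · refine ⟨by field_simp, by field_simp, ?_⟩
    have e : (p/m)^2 + (q/m)^2 = (p^2+q^2)/m^2 := by field_simp
    rw [e, ← hm2, div_self (pow_ne_zero 2 h)]

set_option maxHeartbeats 2000000 in
theorem stmt_17 (u₁ v₁ u₂ v₂ δx δy : ℝ) :
    (∃ T : ℝ, 0 ≤ T ∧
      T ≤ Real.sqrt (u₁ ^ 2 + v₁ ^ 2) + Real.sqrt (u₂ ^ 2 + v₂ ^ 2) +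
        Real.sqrt 2 *
          ((2 * δx - Real.sqrt (u₁ ^ 2 + v₁ ^ 2) * u₁
              - Real.sqrt (u₂ ^ 2 + v₂ ^ 2) * u₂) ^ 2 +
           (2 * δy - Real.sqrt (u₁ ^ 2 + v₁ ^ 2) * v₁
              - Real.sqrt (u₂ ^ 2 + v₂ ^ 2) * v₂) ^ 2) ^ ((1 : ℝ) / 4) ∧
      ∃ x y : ℝ → ℝ, IsAdmissible T x y ∧ MeetsBoundary T u₁ v₁ u₂ v₂ δx δy x y) ∧
    minTime u₁ v₁ u₂ v₂ δx δy ≤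
      Real.sqrt (u₁ ^ 2 + v₁ ^ 2) + Real.sqrt (u₂ ^ 2 + v₂ ^ 2) +
        Real.sqrt 2 *
          ((2 * δx - Real.sqrt (u₁ ^ 2 + v₁ ^ 2) * u₁
              - Real.sqrt (u₂ ^ 2 + v₂ ^ 2) * u₂) ^ 2 +
           (2 * δy - Real.sqrt (u₁ ^ 2 + v₁ ^ 2) * v₁
              - Real.sqrt (u₂ ^ 2 + v₂ ^ 2) * v₂) ^ 2) ^ ((1 : ℝ) / 4) := by
  obtain ⟨hA, hA', hA2⟩ := norm_pair u₁ v₁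
  obtain ⟨hB, hB', hB2⟩ := norm_pair u₂ v₂
  set μ₁ := Real.sqrt (u₁^2+v₁^2) with hμ₁def
  set μ₂ := Real.sqrt (u₂^2+v₂^2) with hμ₂def
  have hμ₁ : 0 ≤ μ₁ := by rw [hμ₁def]; positivity
  have hμ₂ : 0 ≤ μ₂ := by rw [hμ₂def]; positivity
  set Dx := δx - μ₁*u₁/2 - μ₂*u₂/2 with hDxdef
  set Dy := δy - μ₁*v₁/2 - μ₂*v₂/2 with hDydef
  obtain ⟨hC, hC', hC2⟩ := norm_pair Dx Dy
  set dd := Real.sqrt (Dx^2+Dy^2) with hdddef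
  have hd : 0 ≤ dd := by rw [hdddef]; positivity
  have hd2 : dd^2 = Dx^2+Dy^2 := by rw [hdddef]; exact Real.sq_sqrt (by positivity)
  obtain ⟨x, y, adm, meets⟩ := key μ₁ μ₂ dd (u₁/μ₁) (v₁/μ₁) (Dx/dd) (Dy/dd)
    (u₂/μ₂) (v₂/μ₂) hμ₁ hμ₂ hd hA2 hC2 hB2
  have dx_eq : μ₁^2/2*(u₁/μ₁) + dd*(Dx/dd) + μ₂^2/2*(u₂/μ₂) = δx := by
    rw [show μ₁^2/2*(u₁/μ₁) = μ₁*(u₁/μ₁)*(μ₁/2) by ring,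
      show μ₂^2/2*(u₂/μ₂) = μ₂*(u₂/μ₂)*(μ₂/2) by ring, hA, hB, hC, hDxdef]
    ring
  have dy_eq : μ₁^2/2*(v₁/μ₁) + dd*(Dy/dd) + μ₂^2/2*(v₂/μ₂) = δy := by
    rw [show μ₁^2/2*(v₁/μ₁) = μ₁*(v₁/μ₁)*(μ₁/2) by ring,
      show μ₂^2/2*(v₂/μ₂) = μ₂*(v₂/μ₂)*(μ₂/2) by ring, hA', hB', hC', hDydef]
    ring
  rw [hA, hA', hB, hB', dx_eq, dy_eq] at meets
  have hT0 : 0 ≤ μ₁ + 2*Real.sqrt dd + μ₂ := by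
    have := Real.sqrt_nonneg dd; linarith
  have hTle : μ₁ + 2*Real.sqrt dd + μ₂ ≤ μ₁ + μ₂ +
      Real.sqrt 2 * ((2 * δx - μ₁ * u₁ - μ₂ * u₂) ^ 2
        + (2 * δy - μ₁ * v₁ - μ₂ * v₂) ^ 2) ^ ((1 : ℝ) / 4) := by
    have e1 : 2 * δx - μ₁ * u₁ - μ₂ * u₂ = 2*Dx := by rw [hDxdef]; ring
    have e2 : 2 * δy - μ₁ * v₁ - μ₂ * v₂ = 2*Dy := by rw [hDydef]; ring
    rw [e1, e2]
    have e3 : (2*Dx)^2 + (2*Dy)^2 = (2*dd)^2 := by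
      have h4 : dd^2 = Dx^2+Dy^2 := hd2
      nlinarith [h4]
    rw [e3]
    have e4 : ((2*dd)^2 : ℝ) ^ ((1:ℝ)/4) = Real.sqrt (2*dd) := by
      rw [← Real.rpow_natCast (2*dd) 2, ← Real.rpow_mul (by positivity), Real.sqrt_eq_rpow]
      norm_num
    rw [e4, Real.sqrt_mul (by norm_num : (0:ℝ) ≤ 2) dd]
    have h5 : Real.sqrt 2 * Real.sqrt 2 = 2 := Real.mul_self_sqrt (by norm_num)
    nlinarith [Real.sqrt_nonneg dd]
  refine ⟨⟨μ₁ + 2*Real.sqrt dd + μ₂, hT0, hTle, x, y, adm, meets⟩, ?_⟩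
  have hmem : (μ₁ + 2*Real.sqrt dd + μ₂) ∈ {T : ℝ | 0 ≤ T ∧ ∃ x y : ℝ → ℝ,
      IsAdmissible T x y ∧ MeetsBoundary T u₁ v₁ u₂ v₂ δx δy x y} :=
    ⟨hT0, x, y, adm, meets⟩
  exact le_trans (csInf_le ⟨0, fun z hz => hz.1⟩ hmem) hTle
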